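/- Fix integers n ≥ 1, m ≥ 1 and a real α > 0, and set c = (n+m-1)·C(n+m-2, n-1), where C(a,b) denotes the binomial coefficient. Let T̄, W̄ : [0,∞) → ℝ be continuous functions taking values in [0,1] such that T̄ is differentiable with T̄'(t) = W̄(t) - T̄(t) for all t > 0, and such that for every t ≥ 0 the function z ↦ α·e^{-α z}·( W̄(z) + (T̄(z) - W̄(z))·c·Σ_{i=0}^{n-1} C(n-1,i)·(-1)^i·(1/(m+i))·T̄(z)^{m+i} ) is Lebesgue integrable on [t,∞) and W̄(t) = e^{α t}·∫_t^∞ α·e^{-α z}·( W̄(z) + (T̄(z) - W̄(z))·c·Σ_{i=0}^{n-1} C(n-1,i)·(-1)^i·(1/(m+i))·T̄(z)^{m+i} ) dz. Then W̄ is differentiable on (0,∞) and W̄'(t) = α·c·T̄'(t)·Σ_{i=0}^{n-1} C(n-1,i)·(-1)^i·(1/(m+i))·T̄(t)^{m+i} for all t > 0. -/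

import Mathlib

open Filter MeasureTheory

/-- Differentiating the renewal-type integral equation for the complementary workload
distribution `W̄`: if `T̄' = W̄ - T̄` on `(0,∞)` and `W̄` satisfies the integral equation obtained
by conditioning on the previous batch arrival, then `W̄` is differentiable on `(0,∞)` with
`W̄'(t) = α c T̄'(t) Σᵢ C(n-1,i) (-1)ⁱ (1/(m+i)) T̄(t)^{m+i}`. -/
theorem workload_ode_from_integral_equation
    (n m : ℕ) (hn : 1 ≤ n) (hm : 1 ≤ m) (α : ℝ) (hα : 0 < α)
    (c : ℝ) (hc : c = ((n + m - 1 : ℕ) : ℝ) * ((n + m - 2).choose (n - 1) : ℝ))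
    (T W : ℝ → ℝ)
    (hTc : ContinuousOn T (Set.Ici 0)) (hWc : ContinuousOn W (Set.Ici 0))
    (hT01 : ∀ t ≥ (0:ℝ), T t ∈ Set.Icc (0:ℝ) 1)
    (hW01 : ∀ t ≥ (0:ℝ), W t ∈ Set.Icc (0:ℝ) 1)
    (hT' : ∀ t > (0:ℝ), HasDerivAt T (W t - T t) t)
    (hint : ∀ t ≥ (0:ℝ), IntegrableOn
      (fun z => α * Real.exp (-(α * z)) * (W z + (T z - W z) * c *
        ∑ i ∈ Finset.range n,
          ((n - 1).choose i : ℝ) * (-1) ^ i * (1 / ((m : ℝ) + i)) * T z ^ (m + i)))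
      (Set.Ici t))
    (heq : ∀ t ≥ (0:ℝ), W t = Real.exp (α * t) * ∫ z in Set.Ici t,
      α * Real.exp (-(α * z)) * (W z + (T z - W z) * c *
        ∑ i ∈ Finset.range n,
          ((n - 1).choose i : ℝ) * (-1) ^ i * (1 / ((m : ℝ) + i)) * T z ^ (m + i))) :
    ∀ t > (0:ℝ), HasDerivAt W
      (α * c * deriv T t *
        ∑ i ∈ Finset.range n,
          ((n - 1).choose i : ℝ) * (-1) ^ i * (1 / ((m : ℝ) + i)) * T t ^ (m + i)) t := by
  intro s hs
  set S : ℝ → ℝ := fun z => ∑ i ∈ Finset.range n,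
      ((n - 1).choose i : ℝ) * (-1) ^ i * (1 / ((m : ℝ) + i)) * T z ^ (m + i) with hS
  set f : ℝ → ℝ := fun z => α * Real.exp (-(α * z)) * (W z + (T z - W z) * c * S z) with hf
  set F : ℝ → ℝ := fun t => ∫ z in Set.Ici t, f z with hF
  -- continuity of f on Ioi 0
  have hfc : ContinuousOn f (Set.Ioi 0) := by
    have hT' : ContinuousOn T (Set.Ioi 0) := hTc.mono Set.Ioi_subset_Ici_self
    have hW' : ContinuousOn W (Set.Ioi 0) := hWc.mono Set.Ioi_subset_Ici_self
    have hSc : ContinuousOn S (Set.Ioi 0) := by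
      apply continuousOn_finset_sum
      intro i _
      exact (continuousOn_const.mul (hT'.pow _))
    exact (continuousOn_const.mul
      ((Real.continuous_exp.comp ((continuous_const.mul continuous_id).neg)).continuousOn)).mul
      (hW'.add (((hT'.sub hW').mul continuousOn_const).mul hSc))
  have hfs : ContinuousAt f s := by
    have := hfc.continuousAt (IsOpen.mem_nhds isOpen_Ioi hs)
    exact this
  set a : ℝ := s / 2 with ha
  have ha0 : 0 < a := by positivity
  have has : a < s := by linarith
  -- key decomposition of F
  have hkey : ∀ t, a ≤ t → F a = (∫ z in a..t, f z) + F t := by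
    intro t ht
    have ht0 : (0:ℝ) ≤ t := le_trans ha0.le ht
    have h1 : F a = ∫ z in Set.Ioi a, f z := integral_Ici_eq_integral_Ioi
    have h2 : F t = ∫ z in Set.Ioi t, f z := integral_Ici_eq_integral_Ioi
    have hu : Set.Ioc a t ∪ Set.Ioi t = Set.Ioi a := Set.Ioc_union_Ioi_eq_Ioi ht
    have hi1 : IntegrableOn f (Set.Ioc a t) :=
      (hint a ha0.le).mono_set (le_trans (Set.Ioc_subset_Ioi_self.trans Set.Ioi_subset_Ici_self) le_rfl)
    have hi2 : IntegrableOn f (Set.Ioi t) :=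
      (hint t ht0).mono_set Set.Ioi_subset_Ici_self
    have := MeasureTheory.setIntegral_union (Set.Ioc_disjoint_Ioi le_rfl)
      measurableSet_Ioi hi1 hi2 (f := f) (μ := volume)
    rw [hu] at this
    rw [h1, h2, this, intervalIntegral.integral_of_le ht]
  -- derivative of interval integral
  have hii : IntervalIntegrable f volume a s := by
    rw [intervalIntegrable_iff_integrableOn_Ioc_of_le has.le]
    exact (hint a ha0.le).mono_set (Set.Ioc_subset_Ioi_self.trans Set.Ioi_subset_Ici_self)
  have hmeas : StronglyMeasurableAtFilter f (nhds s) volume :=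
    hfc.stronglyMeasurableAtFilter isOpen_Ioi s hs
  have hG : HasDerivAt (fun t => ∫ z in a..t, f z) (f s) s :=
    intervalIntegral.integral_hasDerivAt_right hii hmeas hfs
  -- derivative of F
  have hFd : HasDerivAt F (-(f s)) s := by
    have h1 : HasDerivAt (fun t => F a - ∫ z in a..t, f z) (-(f s)) s := by
      exact hG.const_sub (F a)
    refine h1.congr_of_eventuallyEq ?_
    filter_upwards [IsOpen.mem_nhds isOpen_Ioi (show a < s from has)] with t ht
    have := hkey t (le_of_lt ht)
    linarith
  -- W equals exp(αt) * F t near s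
  have hEd : HasDerivAt (fun t => Real.exp (α * t)) (Real.exp (α * s) * α) s := by
    have h1 : HasDerivAt (fun t : ℝ => α * t) α s := by
      simpa using (hasDerivAt_id s).const_mul α
    exact (Real.hasDerivAt_exp (α * s)).comp s h1
  have hprod : HasDerivAt (fun t => Real.exp (α * t) * F t)
      (Real.exp (α * s) * α * F s + Real.exp (α * s) * (-(f s))) s := hEd.mul hFd
  have hWd : HasDerivAt W (Real.exp (α * s) * α * F s + Real.exp (α * s) * (-(f s))) s := by
    refine hprod.congr_of_eventuallyEq ?_
    filter_upwards [IsOpen.mem_nhds isOpen_Ioi hs] with t ht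
    exact heq t (le_of_lt ht)
  -- finish: compute the derivative value
  have hWs : W s = Real.exp (α * s) * F s := heq s hs.le
  have hTd : deriv T s = W s - T s := (hT' s hs).deriv
  have hexp : Real.exp (α * s) * Real.exp (-(α * s)) = 1 := by
    rw [← Real.exp_add]; simp
  convert hWd using 1
  rw [hTd, hf]
  simp only
  have : Real.exp (α * s) * (α * Real.exp (-(α * s)) * (W s + (T s - W s) * c * S s))
      = α * (W s + (T s - W s) * c * S s) := by
    rw [show Real.exp (α * s) * (α * Real.exp (-(α * s)) * (W s + (T s - W s) * c * S s))
      = (Real.exp (α * s) * Real.exp (-(α * s))) * (α * (W s + (T s - W s) * c * S s)) by ring,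
      hexp, one_mul]
  rw [show Real.exp (α * s) * α * F s = α * (Real.exp (α * s) * F s) by ring, ← hWs]
  rw [mul_neg, this]
  ring
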